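/- arXiv:2111.00581 — 2 statements merged into one kernel-verified Lean document; each statement's English description precedes it below -/
import Mathlib

section
/- For every c > 0, the Gamma distribution with shape parameter m and rate parameter m/c converges weakly, as m → ∞ over the natural numbers, to the Dirac point mass at c; that is, the sequence of probability measures (Gamma(m, m/c))_{m≥1} on ℝ converges in the topology of weak convergence of probability measures to δ_c. -/
open MeasureTheory Filter Topology

open MeasureTheory Filter Topology Real Set
open scoped ENNReal NNReal

lemma gammaAuxIntegrable {s r : ℝ} (hs : 0 < s) (hr : 0 < r) :
    IntegrableOn (fun t : ℝ => t ^ (s - 1) * Real.exp (-(r * t))) (Set.Ioi 0) := by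
  have h0 : IntegrableOn (fun t : ℝ => Real.exp (-t) * t ^ (s - 1)) (Set.Ioi 0) :=
    Real.GammaIntegral_convergent hs
  have h1 : IntegrableOn (fun t : ℝ => Real.exp (-(r * t)) * (r * t) ^ (s - 1))
      (Set.Ioi 0) := by
    rw [show (0:ℝ) = r * 0 by ring] at h0
    exact (integrableOn_Ioi_comp_mul_left_iff
      (fun t : ℝ => Real.exp (-t) * t ^ (s - 1)) 0 hr).2 h0
  have h2 := h1.const_mul (r ^ (s - 1))⁻¹
  refine IntegrableOn.congr_fun h2 (fun x hx => ?_) measurableSet_Ioi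
  have hx0 : (0:ℝ) < x := hx
  rw [Real.mul_rpow hr.le hx0.le]
  field_simp [ (Real.rpow_pos_of_pos hr (s-1)).ne' ]

open ProbabilityTheory in
lemma gammaDensityFun_eq (a r : ℝ) (ha : 0 < a) (hr : 0 < r) (n : ℕ) :
    ∀ x ∈ Set.Ioi (0:ℝ), gammaPDFReal a r x * x ^ n
      = r ^ a / Real.Gamma a * (x ^ (a + n - 1) * Real.exp (-(r * x))) := by
  intro x hx
  have hx0 : (0:ℝ) < x := hx
  rw [gammaPDFReal, if_pos hx0.le]
  rw [show a + (n:ℝ) - 1 = (a - 1) + (n:ℝ) by ring, Real.rpow_add hx0,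
    Real.rpow_natCast]
  ring

open ProbabilityTheory in
lemma gammaMoment (a r : ℝ) (ha : 0 < a) (hr : 0 < r) (n : ℕ) :
    Integrable (fun x : ℝ => x ^ n) (gammaMeasure a r) ∧
    ∫ x, x ^ n ∂(gammaMeasure a r) = Real.Gamma (a + n) / (Real.Gamma a * r ^ n) := by
  have hmeas : Measurable (fun x => (gammaPDFReal a r x).toNNReal) :=
    (measurable_gammaPDFReal a r).real_toNNReal
  have hd : gammaMeasure a r
      = volume.withDensity (fun x => ((gammaPDFReal a r x).toNNReal : ℝ≥0∞)) := by
    rfl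
  have hsmul : (fun x : ℝ => (gammaPDFReal a r x).toNNReal • (x ^ n))
      = fun x : ℝ => gammaPDFReal a r x * x ^ n := by
    funext x
    rw [NNReal.smul_def, smul_eq_mul,
      Real.coe_toNNReal _ (gammaPDFReal_nonneg ha hr x)]
  -- the density-weighted function vanishes off Ici 0
  have hind : (fun x : ℝ => gammaPDFReal a r x * x ^ n)
      = (Set.Ici 0).indicator (fun x : ℝ => gammaPDFReal a r x * x ^ n) := by
    funext x
    by_cases hx : x ∈ Set.Ici (0:ℝ)
    · rw [Set.indicator_of_mem hx]
    · rw [Set.indicator_of_notMem hx, gammaPDFReal, if_neg (by simpa using hx), zero_mul]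
  have han : 0 < a + n := by positivity
  have hIoi : IntegrableOn (fun x : ℝ => gammaPDFReal a r x * x ^ n) (Set.Ioi 0) := by
    refine IntegrableOn.congr_fun
      ((gammaAuxIntegrable han hr).const_mul (r ^ a / Real.Gamma a))
      (fun x hx => ?_) measurableSet_Ioi
    exact (gammaDensityFun_eq a r ha hr n x hx).symm
  have hInt : Integrable (fun x : ℝ => gammaPDFReal a r x * x ^ n) := by
    rw [hind]
    rw [integrable_indicator_iff measurableSet_Ici]
    exact (integrableOn_Ici_iff_integrableOn_Ioi enorm_ne_top).2 hIoi
  constructor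
  · rw [hd, integrable_withDensity_iff_integrable_smul hmeas]
    rw [hsmul]; exact hInt
  · rw [hd, integral_withDensity_eq_integral_smul hmeas]
    rw [show ∫ x, (gammaPDFReal a r x).toNNReal • (x^n) = ∫ x, gammaPDFReal a r x * x ^ n
      from by rw [hsmul]]
    calc ∫ x, gammaPDFReal a r x * x ^ n
        = ∫ x in Set.Ici 0, gammaPDFReal a r x * x ^ n := by
          conv_lhs => rw [hind]
          rw [integral_indicator measurableSet_Ici]
      _ = ∫ x in Set.Ioi 0, gammaPDFReal a r x * x ^ n := integral_Ici_eq_integral_Ioi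
      _ = ∫ x in Set.Ioi 0, r ^ a / Real.Gamma a * (x ^ (a + n - 1) * Real.exp (-(r * x))) :=
          setIntegral_congr_fun measurableSet_Ioi (gammaDensityFun_eq a r ha hr n)
      _ = r ^ a / Real.Gamma a * ((1 / r) ^ (a + n) * Real.Gamma (a + n)) := by
          rw [integral_const_mul, integral_rpow_mul_exp_neg_mul_Ioi han hr]
      _ = Real.Gamma (a + n) / (Real.Gamma a * r ^ n) := by
          rw [one_div, Real.inv_rpow hr.le, Real.rpow_add hr, Real.rpow_natCast]
          have h1 : Real.Gamma a ≠ 0 := (Real.Gamma_pos_of_pos ha).ne'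
          have h2 : r ^ a ≠ 0 := (Real.rpow_pos_of_pos hr a).ne'
          have h3 : (r:ℝ) ^ n ≠ 0 := pow_ne_zero n hr.ne'
          field_simp

open ProbabilityTheory in
lemma gammaVar (m : ℕ) (hm : 1 ≤ m) (c : ℝ) (hc : 0 < c) :
    Integrable (fun x : ℝ => (x - c) ^ 2) (gammaMeasure m (m / c)) ∧
    ∫ x, (x - c) ^ 2 ∂(gammaMeasure m (m / c)) = c ^ 2 / m := by
  have ha : (0:ℝ) < m := by exact_mod_cast hm
  have hr : (0:ℝ) < m / c := div_pos ha hc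
  have := isProbabilityMeasure_gammaMeasure ha hr
  set a : ℝ := (m:ℝ) with ha_def
  set r : ℝ := (m:ℝ) / c with hr_def
  have hΓ : Real.Gamma a ≠ 0 := (Real.Gamma_pos_of_pos ha).ne'
  have h1 := gammaMoment a r ha hr 1
  have h2 := gammaMoment a r ha hr 2
  have g1 : Real.Gamma (a + 1) = a * Real.Gamma a := Real.Gamma_add_one ha.ne'
  have g2 : Real.Gamma (a + 2) = (a + 1) * (a * Real.Gamma a) := by
    rw [show a + 2 = (a + 1) + 1 by ring, Real.Gamma_add_one (by positivity), g1]
  have e1 : ∫ x, x ^ 1 ∂(gammaMeasure a r) = c := by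
    rw [h1.2]
    push_cast
    rw [g1, pow_one, hr_def]
    field_simp
    rw [ha_def]
  have e2 : ∫ x, x ^ 2 ∂(gammaMeasure a r) = (a + 1) * c ^ 2 / a := by
    rw [h2.2]
    push_cast
    rw [g2, hr_def]
    field_simp
    ring
  have hfun : (fun x : ℝ => (x - c) ^ 2)
      = fun x : ℝ => x ^ 2 - (2 * c) * x ^ 1 + c ^ 2 := by
    funext x; ring
  have hmul : Integrable (fun x : ℝ => 2 * c * x ^ 1) (gammaMeasure a r) :=
    h1.1.const_mul _
  have hsub : Integrable (fun x : ℝ => x ^ 2 - 2 * c * x ^ 1) (gammaMeasure a r) :=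
    h2.1.sub hmul
  have hint : Integrable (fun x : ℝ => (x - c) ^ 2) (gammaMeasure a r) := by
    rw [hfun]
    exact hsub.add (integrable_const _)
  refine ⟨hint, ?_⟩
  rw [hfun, integral_add hsub (integrable_const _),
    integral_sub h2.1 hmul, MeasureTheory.integral_const_mul, e1, e2,
    integral_const, probReal_univ]
  simp only [ENNReal.toReal_one, one_smul, smul_eq_mul]
  field_simp
  ring

/-- The Gamma distribution with shape `m` and rate `m / c` converges weakly, as
`m → ∞`, to the Dirac point mass at `c`: the integrals of every bounded continuous
function converge. -/
theorem stmt6 (c : ℝ) (hc : 0 < c) :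
    ∀ f : BoundedContinuousFunction ℝ ℝ,
      Tendsto (fun m : ℕ => ∫ x, f x ∂(ProbabilityTheory.gammaMeasure m (m / c)))
        atTop (𝓝 (∫ x, f x ∂(Measure.dirac c))) := by
  intro f
  rw [integral_dirac]
  rw [Metric.tendsto_atTop]
  intro ε hε
  obtain ⟨δ, hδ, hδf⟩ := Metric.continuousAt_iff.1 (f.continuous.continuousAt (x := c))
    (ε / 4) (by positivity)
  set M : ℝ := ‖f‖ with hM
  have hM0 : 0 ≤ M := norm_nonneg f
  have htend : Tendsto (fun m : ℕ => (2 * M) * (c ^ 2 / δ ^ 2) / m) atTop (𝓝 0) :=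
    tendsto_const_div_atTop_nhds_zero_nat _
  have hev : ∀ᶠ m : ℕ in atTop, (2 * M) * (c ^ 2 / δ ^ 2) / m < ε / 2 :=
    htend.eventually_lt_const (by positivity)
  obtain ⟨N, hN⟩ := eventually_atTop.1 (hev.and (eventually_ge_atTop 1))
  refine ⟨N, fun m hm => ?_⟩
  obtain ⟨h_tail, h_m1⟩ := hN m hm
  have ham : (0:ℝ) < m := by exact_mod_cast h_m1
  have hrm : (0:ℝ) < m / c := div_pos ham hc
  set μ := ProbabilityTheory.gammaMeasure (m:ℝ) ((m:ℝ) / c) with hμ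
  haveI : IsProbabilityMeasure μ := ProbabilityTheory.isProbabilityMeasure_gammaMeasure ham hrm
  obtain ⟨hVint, hVval⟩ := gammaVar m h_m1 c hc
  have hfint : Integrable (fun x => f x) μ := f.integrable μ
  set s : Set ℝ := {x : ℝ | δ ≤ |x - c|} with hs_def
  have hs : MeasurableSet s :=
    measurableSet_le measurable_const
      ((continuous_abs.comp (continuous_id.sub continuous_const)).measurable)
  -- Chebyshev
  have hcheb : (μ s).toReal ≤ c ^ 2 / m / δ ^ 2 := by
    have h1 : δ ^ 2 * (μ s).toReal ≤ c ^ 2 / m := by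
      calc δ ^ 2 * (μ s).toReal = ∫ _ in s, δ ^ 2 ∂μ := by
            rw [setIntegral_const, smul_eq_mul, mul_comm]; rfl
        _ ≤ ∫ x in s, (x - c) ^ 2 ∂μ := by
            refine setIntegral_mono_on ?_ hVint.integrableOn hs (fun x hx => ?_)
            · exact integrableOn_const (measure_lt_top μ s).ne
            · have hx' : δ ≤ |x - c| := hx
              calc δ ^ 2 ≤ |x - c| ^ 2 := by nlinarith [abs_nonneg (x - c)]
                _ = (x - c) ^ 2 := sq_abs _
        _ ≤ ∫ x, (x - c) ^ 2 ∂μ :=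
            setIntegral_le_integral hVint (ae_of_all _ fun x => sq_nonneg _)
        _ = c ^ 2 / m := hVval
    rw [le_div_iff₀ (by positivity : (0:ℝ) < δ ^ 2)]
    nlinarith [h1]
  -- main estimate
  have key : dist (∫ x, f x ∂μ) (f c) ≤ ε / 4 + 2 * M * (μ s).toReal := by
    have hsub : ∫ x, f x ∂μ - f c = ∫ x, (f x - f c) ∂μ := by
      rw [integral_sub hfint (integrable_const _), integral_const, probReal_univ,
        one_smul]
    rw [Real.dist_eq, hsub]
    have habs : |∫ x, (f x - f c) ∂μ| ≤ ∫ x, |f x - f c| ∂μ := by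
      simpa [Real.norm_eq_abs] using
        norm_integral_le_integral_norm (μ := μ) (f := fun x => f x - f c)
    refine habs.trans ?_
    have hrhs_int : Integrable (fun x : ℝ => ε / 4 + s.indicator (fun _ => 2 * M) x) μ :=
      (integrable_const _).add ((integrable_const (2 * M)).indicator hs)
    have hmono : ∫ x, |f x - f c| ∂μ
        ≤ ∫ x, (ε / 4 + s.indicator (fun _ => 2 * M) x) ∂μ := by
      refine integral_mono (hfint.sub (integrable_const _)).abs hrhs_int (fun x => ?_)
      by_cases hx : x ∈ s
      · rw [Set.indicator_of_mem hx]
        have h1 : |f x| ≤ M := f.norm_coe_le_norm x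
        have h2 : |f c| ≤ M := f.norm_coe_le_norm c
        have := abs_sub_abs_le_abs_sub (f x) (f c)
        calc |f x - f c| ≤ |f x| + |f c| := abs_sub _ _
          _ ≤ 2 * M := by linarith
          _ ≤ ε / 4 + 2 * M := by linarith
      · rw [Set.indicator_of_notMem hx, add_zero]
        have hx' : |x - c| < δ := lt_of_not_ge hx
        have := hδf (show dist x c < δ by rwa [Real.dist_eq])
        rw [Real.dist_eq] at this
        linarith
    refine hmono.trans ?_
    rw [integral_add (integrable_const _) ((integrable_const (2 * M)).indicator hs),
      integral_const, probReal_univ, one_smul,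
      integral_indicator_const _ hs, smul_eq_mul, mul_comm]; rfl
  -- combine
  have htail2 : 2 * M * (μ s).toReal ≤ (2 * M) * (c ^ 2 / δ ^ 2) / m := by
    have := mul_le_mul_of_nonneg_left hcheb (by positivity : (0:ℝ) ≤ 2 * M)
    calc 2 * M * (μ s).toReal ≤ 2 * M * (c ^ 2 / m / δ ^ 2) := this
      _ = (2 * M) * (c ^ 2 / δ ^ 2) / m := by ring
  calc dist (∫ x, f x ∂μ) (f c) ≤ ε / 4 + 2 * M * (μ s).toReal := key
    _ ≤ ε / 4 + (2 * M) * (c ^ 2 / δ ^ 2) / m := by linarith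
    _ < ε / 4 + ε / 2 := by linarith
    _ < ε := by linarith
end

section
/- Let T be a p×p sub-intensity matrix all of whose eigenvalues have negative real part, π a probability vector, and θ > 0. Then for every natural number n ≥ 1, the nθ-th moment of the Weibull PH-MoE specification satisfies ∫₀^∞ nθ y^{nθ−1} · πᵀ exp(y^θ · T) e dy = Γ(n+1) · πᵀ (−T)^{−n} e; equivalently, in the homogeneous case θ = 1, ∫₀^∞ n y^{n−1} · πᵀ exp(yT) e dy = n! · πᵀ (−T)^{−n} e. -/
open Matrix MeasureTheory Filter Topology

/-- A sub-intensity matrix: negative diagonal entries, nonnegative off-diagonal entries,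
nonpositive row sums. -/
def IsSubIntensity {p : ℕ} (T : Matrix (Fin p) (Fin p) ℝ) : Prop :=
  (∀ i, T i i < 0) ∧ (∀ i j, i ≠ j → 0 ≤ T i j) ∧ (∀ i, ∑ j, T i j ≤ 0)

/-- A probability vector: nonnegative entries summing to one. -/
def IsProbVec {p : ℕ} (π : Fin p → ℝ) : Prop :=
  (∀ i, 0 ≤ π i) ∧ ∑ i, π i = 1

section Stmt17Aux
open NormedSpace Set
namespace Stmt17Aux
variable {p : ℕ}



noncomputable def mulVecCLM (x : Fin p → ℂ) :
    Matrix (Fin p) (Fin p) ℂ →L[ℂ] (Fin p → ℂ) :=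
  letI : NormedAddCommGroup (Matrix (Fin p) (Fin p) ℂ) := Matrix.linftyOpNormedAddCommGroup
  letI : NormedSpace ℂ (Matrix (Fin p) (Fin p) ℂ) := Matrix.linftyOpNormedSpace
  LinearMap.toContinuousLinearMap
    { toFun := fun M => M *ᵥ x
      map_add' := fun _ _ => Matrix.add_mulVec _ _ x
      map_smul' := fun c M => Matrix.smul_mulVec c M x }

lemma mulVecCLM_apply (x : Fin p → ℂ) (M : Matrix (Fin p) (Fin p) ℂ) :
    mulVecCLM x M = M *ᵥ x := rfl

lemma pow_le_factorial_mul_exp (j : ℕ) {t : ℝ} (ht : 0 ≤ t) :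
    t ^ j ≤ (j.factorial : ℝ) * Real.exp t := by
  have h1 : t ^ j / (j.factorial : ℝ) ≤ Real.exp t := by
    refine le_trans ?_ (Real.sum_le_exp_of_nonneg ht (j + 1))
    exact Finset.single_le_sum (f := fun i => t ^ i / (i.factorial : ℝ))
      (fun i _ => by positivity) (Finset.self_mem_range_succ j)
  have hj : (0:ℝ) < (j.factorial : ℝ) := by positivity
  calc t ^ j = (t ^ j / (j.factorial : ℝ)) * (j.factorial : ℝ) := by field_simp
    _ ≤ Real.exp t * (j.factorial : ℝ) := mul_le_mul_of_nonneg_right h1 hj.le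
    _ = (j.factorial : ℝ) * Real.exp t := mul_comm _ _

lemma decay_c (A : Matrix (Fin p) (Fin p) ℂ)
    (hEig : ∀ μ ∈ spectrum ℂ A, μ.re < 0) (v : Fin p → ℂ) :
    ∃ C : ℝ, 0 ≤ C ∧ ∃ ε : ℝ, 0 < ε ∧ ∀ u : ℝ, 0 ≤ u →
      ‖(exp (u • A)) *ᵥ v‖ ≤ C * Real.exp (-(ε * u)) := by
  classical
  suffices h : ∃ C : ℝ, ∃ ε : ℝ, 0 < ε ∧ ∀ u : ℝ, 0 ≤ u →
      ‖(exp (u • A)) *ᵥ v‖ ≤ C * Real.exp (-(ε * u)) by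
    obtain ⟨C, ε, hε, hb⟩ := h
    refine ⟨C, ?_, ε, hε, hb⟩
    have := hb 0 le_rfl
    simp only [mul_zero, neg_zero, Real.exp_zero, mul_one] at this
    exact le_trans (norm_nonneg _) this
  set f : Module.End ℂ (Fin p → ℂ) := Matrix.toLinAlgEquiv' A with hf
  have htop : ⨆ μ : ℂ, f.maxGenEigenspace μ = ⊤ :=
    Module.End.iSup_maxGenEigenspace_eq_top f
  have hv : v ∈ ⨆ μ : ℂ, f.maxGenEigenspace μ := by rw [htop]; trivial
  refine Submodule.iSup_induction'
    (motive := fun x _ => ∃ C : ℝ, ∃ ε : ℝ, 0 < ε ∧ ∀ u : ℝ, 0 ≤ u →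
      ‖(exp (u • A)) *ᵥ x‖ ≤ C * Real.exp (-(ε * u)))
    (p := fun μ => f.maxGenEigenspace μ) ?_ ?_ ?_ hv
  · -- generalized eigenvectors
    intro μ x hx
    by_cases hx0 : x = 0
    · exact ⟨0, 1, one_pos, fun u _ => by simp [hx0, Matrix.mulVec_zero]⟩
    obtain ⟨k, hk⟩ := (Module.End.mem_maxGenEigenspace f μ x).mp hx
    have hmem : μ ∈ spectrum ℂ A := by
      rw [← AlgEquiv.spectrum_eq (Matrix.toLinAlgEquiv' (R := ℂ) (n := Fin p)) A]
      rw [spectrum.mem_iff]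
      intro hunit
      apply hx0
      have hunit' : IsUnit (f - μ • (1 : Module.End ℂ (Fin p → ℂ))) := by
        have h2 := hunit.neg
        have he : -(algebraMap ℂ (Module.End ℂ (Fin p → ℂ)) μ - f)
            = f - μ • (1 : Module.End ℂ (Fin p → ℂ)) := by
          rw [Algebra.algebraMap_eq_smul_one]; abel
        rwa [he] at h2
      have hinj : Function.Injective ((f - μ • (1 : Module.End ℂ (Fin p → ℂ))) ^ k) :=
        ((Module.End.isUnit_iff _).mp (hunit'.pow k)).injective
      have := hinj (a₂ := 0) (by simpa using hk)
      simpa using this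
    have hre : μ.re < 0 := hEig μ hmem
    set δ : ℝ := -μ.re / 2 with hδdef
    have hδ : 0 < δ := by rw [hδdef]; linarith
    set N : Matrix (Fin p) (Fin p) ℂ := A - μ • 1 with hN
    have hNx : ∀ j, k ≤ j → (N ^ j) *ᵥ x = 0 := by
      intro j hj
      have hNf : Matrix.toLinAlgEquiv' (N ^ j)
          = (f - μ • (1 : Module.End ℂ (Fin p → ℂ))) ^ j := by
        rw [map_pow, hN, map_sub, _root_.map_smul, _root_.map_one]
      have hz : ((f - μ • (1 : Module.End ℂ (Fin p → ℂ))) ^ j) x = 0 := by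
        obtain ⟨l, rfl⟩ := Nat.exists_eq_add_of_le hj
        rw [add_comm, pow_add, Module.End.mul_apply, hk, map_zero]
      calc (N ^ j) *ᵥ x = Matrix.toLinAlgEquiv' (N ^ j) x := by
            rw [Matrix.toLinAlgEquiv'_apply]
        _ = 0 := by rw [hNf, hz]
    letI : NormedAddCommGroup (Matrix (Fin p) (Fin p) ℂ) := Matrix.linftyOpNormedAddCommGroup
    letI : NormedRing (Matrix (Fin p) (Fin p) ℂ) := Matrix.linftyOpNormedRing
    letI : NormedAlgebra ℝ (Matrix (Fin p) (Fin p) ℂ) := Matrix.linftyOpNormedAlgebra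
    letI : NormedAlgebra ℂ (Matrix (Fin p) (Fin p) ℂ) := Matrix.linftyOpNormedAlgebra
    have key : ∀ u : ℝ, (exp (u • A)) *ᵥ x
        = Complex.exp (u * μ) •
          ∑ j ∈ Finset.range k, (((j.factorial : ℝ))⁻¹ * u ^ j) • ((N ^ j) *ᵥ x) := by
      intro u
      have halg : algebraMap ℂ (Matrix (Fin p) (Fin p) ℂ) ((u : ℂ) * μ)
          = u • (μ • (1 : Matrix (Fin p) (Fin p) ℂ)) := by
        rw [Algebra.algebraMap_eq_smul_one, ← Complex.real_smul, smul_assoc]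
      have hsplit : u • A = algebraMap ℂ (Matrix (Fin p) (Fin p) ℂ) ((u : ℂ) * μ) + u • N := by
        rw [halg, ← smul_add, hN]
        congr 1
        abel
      have hcomm : Commute (algebraMap ℂ (Matrix (Fin p) (Fin p) ℂ) ((u : ℂ) * μ)) (u • N) :=
        Algebra.commutes _ _
      have h1 : exp (u • A) = Complex.exp (u * μ) • exp (u • N) := by
        rw [hsplit, Matrix.exp_add_of_commute _ _ hcomm]
        erw [← map_exp (algebraMap ℂ (Matrix (Fin p) (Fin p) ℂ))
            (continuous_algebraMap _ _) ((u : ℂ) * μ),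
          ← Complex.exp_eq_exp_ℂ,
          Algebra.algebraMap_eq_smul_one, smul_mul_assoc, one_mul]
      rw [h1, Matrix.smul_mulVec]
      congr 1
      have hsum : Summable fun j : ℕ => ((j.factorial : ℝ))⁻¹ • (u • N) ^ j :=
        expSeries_summable' (𝕂 := ℝ) (u • N)
      have hts : exp (u • N) *ᵥ x = ∑' j : ℕ, (((j.factorial : ℝ))⁻¹ • (u • N) ^ j) *ᵥ x := by
        rw [exp_eq_tsum (𝕂 := ℝ), ← mulVecCLM_apply x, ContinuousLinearMap.map_tsum _ hsum]
        rfl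
      rw [hts]
      have hterm : ∀ j : ℕ, (((j.factorial : ℝ))⁻¹ • (u • N) ^ j) *ᵥ x
          = (((j.factorial : ℝ))⁻¹ * u ^ j) • ((N ^ j) *ᵥ x) := by
        intro j
        rw [smul_pow, Matrix.smul_mulVec, Matrix.smul_mulVec, smul_smul]
      simp_rw [hterm]
      refine tsum_eq_sum ?_
      intro j hj
      rw [hNx j (le_of_not_gt fun h => hj (Finset.mem_range.mpr h)), smul_zero]
    refine ⟨∑ j ∈ Finset.range k, δ⁻¹ ^ j * ‖(N ^ j) *ᵥ x‖, δ, hδ, fun u hu => ?_⟩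
    rw [key u, norm_smul]
    have h1 : ‖Complex.exp ((u : ℂ) * μ)‖ = Real.exp (u * μ.re) := by
      rw [Complex.norm_exp]
      congr 1
      simp [Complex.mul_re]
    have h2 : ‖∑ j ∈ Finset.range k, (((j.factorial : ℝ))⁻¹ * u ^ j) • ((N ^ j) *ᵥ x)‖
        ≤ (∑ j ∈ Finset.range k, δ⁻¹ ^ j * ‖(N ^ j) *ᵥ x‖) * Real.exp (δ * u) := by
      rw [Finset.sum_mul]
      refine le_trans (norm_sum_le _ _) (Finset.sum_le_sum fun j _ => ?_)
      rw [norm_smul]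
      have habs : ‖((j.factorial : ℝ))⁻¹ * u ^ j‖ = ((j.factorial : ℝ))⁻¹ * u ^ j := by
        rw [Real.norm_eq_abs, abs_of_nonneg]; positivity
      rw [habs]
      have hδj : (0:ℝ) < δ ^ j := pow_pos hδ j
      have hpow : u ^ j ≤ (j.factorial : ℝ) * δ⁻¹ ^ j * Real.exp (δ * u) := by
        have h := pow_le_factorial_mul_exp j (t := δ * u) (by positivity)
        rw [mul_pow] at h
        calc u ^ j = δ⁻¹ ^ j * (δ ^ j * u ^ j) := by
              rw [← mul_assoc, ← mul_pow, inv_mul_cancel₀ hδ.ne', one_pow, one_mul]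
          _ ≤ δ⁻¹ ^ j * ((j.factorial : ℝ) * Real.exp (δ * u)) := by
              refine mul_le_mul_of_nonneg_left h (by positivity)
          _ = (j.factorial : ℝ) * δ⁻¹ ^ j * Real.exp (δ * u) := by ring
      calc ((j.factorial : ℝ))⁻¹ * u ^ j * ‖(N ^ j) *ᵥ x‖
          ≤ ((j.factorial : ℝ))⁻¹ * ((j.factorial : ℝ) * δ⁻¹ ^ j * Real.exp (δ * u))
              * ‖(N ^ j) *ᵥ x‖ := by
            refine mul_le_mul_of_nonneg_right (mul_le_mul_of_nonneg_left hpow (by positivity))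
              (norm_nonneg _)
        _ = δ⁻¹ ^ j * ‖(N ^ j) *ᵥ x‖ * Real.exp (δ * u) := by
            field_simp
    have hexp : Real.exp (u * μ.re) * Real.exp (δ * u) = Real.exp (-(δ * u)) := by
      rw [← Real.exp_add]
      congr 1
      rw [hδdef]
      ring
    calc ‖Complex.exp ((u : ℂ) * μ)‖
          * ‖∑ j ∈ Finset.range k, (((j.factorial : ℝ))⁻¹ * u ^ j) • ((N ^ j) *ᵥ x)‖
        ≤ Real.exp (u * μ.re)
          * ((∑ j ∈ Finset.range k, δ⁻¹ ^ j * ‖(N ^ j) *ᵥ x‖) * Real.exp (δ * u)) := by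
          rw [h1]
          exact mul_le_mul_of_nonneg_left h2 (Real.exp_nonneg _)
      _ = (∑ j ∈ Finset.range k, δ⁻¹ ^ j * ‖(N ^ j) *ᵥ x‖)
          * (Real.exp (u * μ.re) * Real.exp (δ * u)) := by ring
      _ = (∑ j ∈ Finset.range k, δ⁻¹ ^ j * ‖(N ^ j) *ᵥ x‖) * Real.exp (-(δ * u)) := by
          rw [hexp]
  · exact ⟨0, 1, one_pos, fun u _ => by simp [Matrix.mulVec_zero]⟩
  · rintro x y hhx hhy ⟨C₁, ε₁, hε₁, hb₁⟩ ⟨C₂, ε₂, hε₂, hb₂⟩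
    have hC₁ : 0 ≤ C₁ := by
      have := hb₁ 0 le_rfl
      simp only [mul_zero, neg_zero, Real.exp_zero, mul_one] at this
      exact le_trans (norm_nonneg _) this
    have hC₂ : 0 ≤ C₂ := by
      have := hb₂ 0 le_rfl
      simp only [mul_zero, neg_zero, Real.exp_zero, mul_one] at this
      exact le_trans (norm_nonneg _) this
    refine ⟨C₁ + C₂, min ε₁ ε₂, lt_min hε₁ hε₂, fun u hu => ?_⟩
    have he₁ : Real.exp (-(ε₁ * u)) ≤ Real.exp (-(min ε₁ ε₂ * u)) :=
      Real.exp_le_exp.mpr (neg_le_neg (mul_le_mul_of_nonneg_right (min_le_left _ _) hu))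
    have he₂ : Real.exp (-(ε₂ * u)) ≤ Real.exp (-(min ε₁ ε₂ * u)) :=
      Real.exp_le_exp.mpr (neg_le_neg (mul_le_mul_of_nonneg_right (min_le_right _ _) hu))
    calc ‖exp (u • A) *ᵥ (x + y)‖
        = ‖exp (u • A) *ᵥ x + exp (u • A) *ᵥ y‖ := by rw [Matrix.mulVec_add]
      _ ≤ ‖exp (u • A) *ᵥ x‖ + ‖exp (u • A) *ᵥ y‖ := norm_add_le _ _
      _ ≤ C₁ * Real.exp (-(ε₁ * u)) + C₂ * Real.exp (-(ε₂ * u)) :=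
          add_le_add (hb₁ u hu) (hb₂ u hu)
      _ ≤ C₁ * Real.exp (-(min ε₁ ε₂ * u)) + C₂ * Real.exp (-(min ε₁ ε₂ * u)) :=
          add_le_add (mul_le_mul_of_nonneg_left he₁ hC₁) (mul_le_mul_of_nonneg_left he₂ hC₂)
      _ = (C₁ + C₂) * Real.exp (-(min ε₁ ε₂ * u)) := by ring



lemma exp_map (T : Matrix (Fin p) (Fin p) ℝ) (u : ℝ) :
    (exp (u • T)).map (algebraMap ℝ ℂ)
      = exp (u • T.map (algebraMap ℝ ℂ)) := by
  letI : NormedAddCommGroup (Matrix (Fin p) (Fin p) ℝ) := Matrix.linftyOpNormedAddCommGroup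
  letI : NormedRing (Matrix (Fin p) (Fin p) ℝ) := Matrix.linftyOpNormedRing
  letI : NormedAlgebra ℝ (Matrix (Fin p) (Fin p) ℝ) := Matrix.linftyOpNormedAlgebra
  letI : NormedAlgebra ℚ (Matrix (Fin p) (Fin p) ℝ) := Matrix.linftyOpNormedAlgebra
  letI : NormedAddCommGroup (Matrix (Fin p) (Fin p) ℂ) := Matrix.linftyOpNormedAddCommGroup
  letI : NormedRing (Matrix (Fin p) (Fin p) ℂ) := Matrix.linftyOpNormedRing
  letI : NormedAlgebra ℝ (Matrix (Fin p) (Fin p) ℂ) := Matrix.linftyOpNormedAlgebra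
  letI : NormedAlgebra ℚ (Matrix (Fin p) (Fin p) ℂ) := Matrix.linftyOpNormedAlgebra
  have hc : Continuous fun M : Matrix (Fin p) (Fin p) ℝ => M.map (algebraMap ℝ ℂ) :=
    continuous_id.matrix_map (continuous_algebraMap ℝ ℂ)
  have h := map_exp ((algebraMap ℝ ℂ).mapMatrix) hc (u • T)
  have h2 : ((algebraMap ℝ ℂ).mapMatrix) (u • T) = u • T.map (algebraMap ℝ ℂ) := by
    ext i j
    simp [Complex.real_smul]
  rw [← h2]
  exact h

lemma decay_r (T : Matrix (Fin p) (Fin p) ℝ)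
    (hEig : ∀ μ ∈ spectrum ℂ (T.map (algebraMap ℝ ℂ)), μ.re < 0) (w : Fin p → ℝ) :
    ∃ C : ℝ, 0 ≤ C ∧ ∃ ε : ℝ, 0 < ε ∧ ∀ u : ℝ, 0 ≤ u → ∀ i,
      |((exp (u • T)) *ᵥ w) i| ≤ C * Real.exp (-(ε * u)) := by
  obtain ⟨C, hC, ε, hε, hb⟩ := decay_c (T.map (algebraMap ℝ ℂ)) hEig (fun i => (w i : ℂ))
  refine ⟨C, hC, ε, hε, fun u hu i => ?_⟩
  have hmap : ((((exp (u • T)) *ᵥ w) i : ℝ) : ℂ)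
      = ((exp (u • T.map (algebraMap ℝ ℂ))) *ᵥ fun i => (w i : ℂ)) i := by
    have h := RingHom.map_mulVec (algebraMap ℝ ℂ) (exp (u • T)) w i
    rw [exp_map] at h
    exact h
  calc |((exp (u • T)) *ᵥ w) i|
      = ‖((((exp (u • T)) *ᵥ w) i : ℝ) : ℂ)‖ := by rw [Complex.norm_real, Real.norm_eq_abs]
    _ = ‖((exp (u • T.map (algebraMap ℝ ℂ))) *ᵥ fun i => (w i : ℂ)) i‖ := by rw [hmap]
    _ ≤ ‖(exp (u • T.map (algebraMap ℝ ℂ))) *ᵥ fun i => (w i : ℂ)‖ :=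
        norm_le_pi_norm _ i
    _ ≤ C * Real.exp (-(ε * u)) := hb u hu

lemma decay_s (T : Matrix (Fin p) (Fin p) ℝ)
    (hEig : ∀ μ ∈ spectrum ℂ (T.map (algebraMap ℝ ℂ)), μ.re < 0) (π w : Fin p → ℝ) :
    ∃ C : ℝ, 0 ≤ C ∧ ∃ ε : ℝ, 0 < ε ∧ ∀ u : ℝ, 0 ≤ u →
      |π ⬝ᵥ ((exp (u • T)) *ᵥ w)| ≤ C * Real.exp (-(ε * u)) := by
  obtain ⟨C, hC, ε, hε, hb⟩ := decay_r T hEig w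
  refine ⟨(∑ i, |π i|) * C, by positivity, ε, hε, fun u hu => ?_⟩
  calc |π ⬝ᵥ ((exp (u • T)) *ᵥ w)|
      ≤ ∑ i, |π i * ((exp (u • T)) *ᵥ w) i| := Finset.abs_sum_le_sum_abs _ _
    _ ≤ ∑ i, |π i| * (C * Real.exp (-(ε * u))) := by
        refine Finset.sum_le_sum fun i _ => ?_
        rw [abs_mul]
        exact mul_le_mul_of_nonneg_left (hb u hu i) (abs_nonneg _)
    _ = (∑ i, |π i|) * C * Real.exp (-(ε * u)) := by
        rw [← Finset.sum_mul]
        ring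
  
noncomputable def dotL (π w : Fin p → ℝ) : Matrix (Fin p) (Fin p) ℝ →L[ℝ] ℝ :=
  letI : NormedAddCommGroup (Matrix (Fin p) (Fin p) ℝ) := Matrix.linftyOpNormedAddCommGroup
  letI : NormedSpace ℝ (Matrix (Fin p) (Fin p) ℝ) := Matrix.linftyOpNormedSpace
  LinearMap.toContinuousLinearMap
    { toFun := fun M => π ⬝ᵥ (M *ᵥ w)
      map_add' := fun M₁ M₂ => by simp [Matrix.add_mulVec, dotProduct_add]
      map_smul' := fun c M => by simp [Matrix.smul_mulVec, dotProduct_smul] }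

lemma dotL_apply (π w : Fin p → ℝ) (M : Matrix (Fin p) (Fin p) ℝ) :
    dotL π w M = π ⬝ᵥ (M *ᵥ w) := rfl

lemma cont_psi (T : Matrix (Fin p) (Fin p) ℝ) (π w : Fin p → ℝ) :
    Continuous fun u : ℝ => π ⬝ᵥ ((exp (u • T)) *ᵥ w) := by
  letI : NormedAddCommGroup (Matrix (Fin p) (Fin p) ℝ) := Matrix.linftyOpNormedAddCommGroup
  letI : NormedRing (Matrix (Fin p) (Fin p) ℝ) := Matrix.linftyOpNormedRing
  letI : NormedAlgebra ℝ (Matrix (Fin p) (Fin p) ℝ) := Matrix.linftyOpNormedAlgebra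
  letI : NormedAlgebra ℚ (Matrix (Fin p) (Fin p) ℝ) := Matrix.linftyOpNormedAlgebra
  have h1 : Continuous fun u : ℝ => exp (u • T) :=
    exp_continuous.comp (continuous_id.smul continuous_const)
  exact (dotL π w).continuous.comp h1

lemma hasDerivAt_psi (T : Matrix (Fin p) (Fin p) ℝ) (π w : Fin p → ℝ) (u : ℝ) :
    HasDerivAt (fun u : ℝ => π ⬝ᵥ ((exp (u • T)) *ᵥ w))
      (π ⬝ᵥ ((exp (u • T)) *ᵥ (T *ᵥ w))) u := by
  letI : NormedAddCommGroup (Matrix (Fin p) (Fin p) ℝ) := Matrix.linftyOpNormedAddCommGroup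
  letI : NormedRing (Matrix (Fin p) (Fin p) ℝ) := Matrix.linftyOpNormedRing
  letI : NormedAlgebra ℝ (Matrix (Fin p) (Fin p) ℝ) := Matrix.linftyOpNormedAlgebra
  have h := hasDerivAt_exp_smul_const (𝕂 := ℝ) T u
  have h2 := ((dotL π w).hasFDerivAt (x := exp (u • T) )).comp_hasDerivAt u h
  have h3 : dotL π w (exp (u • T) * T) = π ⬝ᵥ ((exp (u • T)) *ᵥ (T *ᵥ w)) := by
    rw [dotL_apply, Matrix.mulVec_mulVec]
  replace h2 := h2.congr_deriv h3
  exact h2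



lemma poly_decay (T : Matrix (Fin p) (Fin p) ℝ)
    (hEig : ∀ μ ∈ spectrum ℂ (T.map (algebraMap ℝ ℂ)), μ.re < 0) (π w : Fin p → ℝ)
    (m : ℕ) :
    ∃ C : ℝ, 0 ≤ C ∧ ∃ ε : ℝ, 0 < ε ∧ ∀ u : ℝ, 0 ≤ u →
      |u ^ m * (π ⬝ᵥ ((exp (u • T)) *ᵥ w))| ≤ C * Real.exp (-(ε * u)) := by
  obtain ⟨C, hC, ε, hε, hb⟩ := decay_s T hEig π w
  refine ⟨(m.factorial : ℝ) * (2 / ε) ^ m * C, by positivity, ε / 2, by positivity,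
    fun u hu => ?_⟩
  have h1 : u ^ m ≤ (m.factorial : ℝ) * (2 / ε) ^ m * Real.exp (ε / 2 * u) := by
    have h := pow_le_factorial_mul_exp m (t := ε / 2 * u) (by positivity)
    rw [mul_pow] at h
    calc u ^ m = (2 / ε) ^ m * ((ε / 2) ^ m * u ^ m) := by
          rw [← mul_assoc, ← mul_pow]
          field_simp
          simp
      _ ≤ (2 / ε) ^ m * ((m.factorial : ℝ) * Real.exp (ε / 2 * u)) :=
          mul_le_mul_of_nonneg_left h (by positivity)
      _ = (m.factorial : ℝ) * (2 / ε) ^ m * Real.exp (ε / 2 * u) := by ring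
  rw [abs_mul, abs_pow, abs_of_nonneg hu]
  calc u ^ m * |π ⬝ᵥ ((exp (u • T)) *ᵥ w)|
      ≤ ((m.factorial : ℝ) * (2 / ε) ^ m * Real.exp (ε / 2 * u)) * (C * Real.exp (-(ε * u))) :=
        mul_le_mul h1 (hb u hu) (abs_nonneg _) (by positivity)
    _ = (m.factorial : ℝ) * (2 / ε) ^ m * C * (Real.exp (ε / 2 * u) * Real.exp (-(ε * u))) := by
        ring
    _ = (m.factorial : ℝ) * (2 / ε) ^ m * C * Real.exp (-(ε / 2 * u)) := by
        rw [← Real.exp_add]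
        congr 1
        ring

lemma integ (T : Matrix (Fin p) (Fin p) ℝ)
    (hEig : ∀ μ ∈ spectrum ℂ (T.map (algebraMap ℝ ℂ)), μ.re < 0) (π w : Fin p → ℝ)
    (m : ℕ) :
    IntegrableOn (fun u : ℝ => u ^ m * (π ⬝ᵥ ((exp (u • T)) *ᵥ w))) (Ioi 0) := by
  obtain ⟨C, hC, ε, hε, hb⟩ := poly_decay T hEig π w m
  have hmeas : AEStronglyMeasurable (fun u : ℝ => u ^ m * (π ⬝ᵥ ((exp (u • T)) *ᵥ w)))
      (volume.restrict (Ioi 0)) :=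
    ((continuous_pow m).mul (cont_psi T π w)).aestronglyMeasurable
  refine Integrable.mono' ((exp_neg_integrableOn_Ioi 0 hε).const_mul C) hmeas ?_
  rw [ae_restrict_iff' measurableSet_Ioi]
  filter_upwards with u hu
  rw [Real.norm_eq_abs]
  rw [neg_mul]
  exact hb u (le_of_lt hu)

lemma tend (T : Matrix (Fin p) (Fin p) ℝ)
    (hEig : ∀ μ ∈ spectrum ℂ (T.map (algebraMap ℝ ℂ)), μ.re < 0) (π w : Fin p → ℝ)
    (m : ℕ) :
    Tendsto (fun u : ℝ => u ^ m * (π ⬝ᵥ ((exp (u • T)) *ᵥ w))) atTop (𝓝 0) := by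
  obtain ⟨C, hC, ε, hε, hb⟩ := poly_decay T hEig π w m
  have h2 : Tendsto (fun u : ℝ => Real.exp (-(ε * u))) atTop (𝓝 0) :=
    Real.tendsto_exp_atBot.comp
      (tendsto_neg_atTop_atBot.comp (Tendsto.const_mul_atTop hε tendsto_id))
  refine squeeze_zero_norm' ?_ (by simpa using h2.const_mul C)
  filter_upwards [eventually_ge_atTop (0:ℝ)] with u hu
  rw [Real.norm_eq_abs]
  exact hb u hu

lemma core (T : Matrix (Fin p) (Fin p) ℝ)
    (hEig : ∀ μ ∈ spectrum ℂ (T.map (algebraMap ℝ ℂ)), μ.re < 0)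
    (hTi : T * T⁻¹ = 1) (π : Fin p → ℝ) : ∀ n k : ℕ,
    ∫ u in Ioi (0:ℝ), u ^ n * (π ⬝ᵥ ((exp (u • T)) *ᵥ ((T⁻¹ ^ k) *ᵥ fun _ => (1:ℝ))))
      = (-1 : ℝ) ^ (n + 1) * (n.factorial : ℝ) *
        (π ⬝ᵥ ((T⁻¹ ^ (n + k + 1)) *ᵥ fun _ => (1:ℝ))) := by
  have hTw : ∀ k : ℕ, T *ᵥ ((T⁻¹ ^ (k + 1)) *ᵥ fun _ => (1:ℝ)) = (T⁻¹ ^ k) *ᵥ fun _ => (1:ℝ) := by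
    intro k
    rw [Matrix.mulVec_mulVec, pow_succ', ← mul_assoc, hTi, one_mul]
  have hD : ∀ k : ℕ, ∀ u : ℝ, HasDerivAt
      (fun u : ℝ => π ⬝ᵥ ((exp (u • T)) *ᵥ ((T⁻¹ ^ (k + 1)) *ᵥ fun _ => (1:ℝ))))
      (π ⬝ᵥ ((exp (u • T)) *ᵥ ((T⁻¹ ^ k) *ᵥ fun _ => (1:ℝ)))) u := by
    intro k u
    have h := hasDerivAt_psi T π ((T⁻¹ ^ (k + 1)) *ᵥ fun _ => (1:ℝ)) u
    rwa [hTw k] at h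
  have hF0 : ∀ k : ℕ, (fun u : ℝ => π ⬝ᵥ ((exp (u • T)) *ᵥ ((T⁻¹ ^ k) *ᵥ fun _ => (1:ℝ)))) 0
      = π ⬝ᵥ ((T⁻¹ ^ k) *ᵥ fun _ => (1:ℝ)) := by
    intro k
    simp only [zero_smul, exp_zero, Matrix.one_mulVec]
  intro n
  induction n with
  | zero =>
    intro k
    simp only [pow_zero, one_mul, zero_add]
    have h0 := integral_Ioi_of_hasDerivAt_of_tendsto' (a := 0)
      (fun u _ => hD k u)
      ((integ T hEig π ((T⁻¹ ^ k) *ᵥ fun _ => (1:ℝ)) 0).congr_fun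
        (fun u _ => by simp only [pow_zero, one_mul]) measurableSet_Ioi)
      ((tend T hEig π ((T⁻¹ ^ (k + 1)) *ᵥ fun _ => (1:ℝ)) 0).congr (fun u => by
        rw [pow_zero, one_mul]))
    rw [h0]
    simp only [zero_smul, exp_zero, Matrix.one_mulVec, Nat.factorial_zero, Nat.cast_one,
      pow_one]
    ring
  | succ n ih =>
    intro k
    have hint1 : IntegrableOn (fun u : ℝ => ((n : ℝ) + 1) * u ^ n *
        (π ⬝ᵥ ((exp (u • T)) *ᵥ ((T⁻¹ ^ (k + 1)) *ᵥ fun _ => (1:ℝ))))) (Ioi 0) := by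
      have h1 : IntegrableOn (fun u : ℝ => ((n : ℝ) + 1) * (u ^ n *
          (π ⬝ᵥ ((exp (u • T)) *ᵥ ((T⁻¹ ^ (k + 1)) *ᵥ fun _ => (1:ℝ)))))) (Ioi 0) :=
        (integ T hEig π ((T⁻¹ ^ (k + 1)) *ᵥ fun _ => (1:ℝ)) n).const_mul ((n : ℝ) + 1)
      refine h1.congr_fun (fun u _ => by ring) measurableSet_Ioi
    have hint2 := integ T hEig π ((T⁻¹ ^ k) *ᵥ fun _ => (1:ℝ)) (n + 1)
    have hGd : ∀ u : ℝ, HasDerivAt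
        (fun u : ℝ => u ^ (n + 1) *
          (π ⬝ᵥ ((exp (u • T)) *ᵥ ((T⁻¹ ^ (k + 1)) *ᵥ fun _ => (1:ℝ)))))
        (((n : ℝ) + 1) * u ^ n *
            (π ⬝ᵥ ((exp (u • T)) *ᵥ ((T⁻¹ ^ (k + 1)) *ᵥ fun _ => (1:ℝ))))
          + u ^ (n + 1) * (π ⬝ᵥ ((exp (u • T)) *ᵥ ((T⁻¹ ^ k) *ᵥ fun _ => (1:ℝ))))) u := by
      intro u
      have h := (hasDerivAt_pow (n + 1) u).fun_mul (hD k u)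
      simpa [Nat.add_sub_cancel, Nat.cast_add, Nat.cast_one] using h
    have h0 := integral_Ioi_of_hasDerivAt_of_tendsto' (a := 0)
      (fun u _ => hGd u) (hint1.add hint2)
      (tend T hEig π ((T⁻¹ ^ (k + 1)) *ᵥ fun _ => (1:ℝ)) (n + 1))
    rw [integral_add hint1 hint2] at h0
    simp only [zero_pow (Nat.succ_ne_zero n), zero_mul, sub_zero, zero_sub] at h0
    have hA : ∫ u in Ioi (0:ℝ), ((n : ℝ) + 1) * u ^ n *
        (π ⬝ᵥ ((exp (u • T)) *ᵥ ((T⁻¹ ^ (k + 1)) *ᵥ fun _ => (1:ℝ))))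
        = ((n : ℝ) + 1) * ((-1 : ℝ) ^ (n + 1) * (n.factorial : ℝ) *
          (π ⬝ᵥ ((T⁻¹ ^ (n + (k + 1) + 1)) *ᵥ fun _ => (1:ℝ)))) := by
      rw [← ih (k + 1), ← integral_const_mul]
      congr 1
      funext u
      ring
    rw [hA] at h0
    have : ∫ u in Ioi (0:ℝ), u ^ (n + 1) *
        (π ⬝ᵥ ((exp (u • T)) *ᵥ ((T⁻¹ ^ k) *ᵥ fun _ => (1:ℝ))))
        = -(((n : ℝ) + 1) * ((-1 : ℝ) ^ (n + 1) * (n.factorial : ℝ) *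
          (π ⬝ᵥ ((T⁻¹ ^ (n + (k + 1) + 1)) *ᵥ fun _ => (1:ℝ))))) := by linarith
    rw [this, show n + (k + 1) + 1 = n + 1 + k + 1 from by omega]
    rw [Nat.factorial_succ]
    push_cast
    ring

end Stmt17Aux
end Stmt17Aux

open NormedSpace Set Stmt17Aux in
/-- Moments of the Weibull PH-MoE specification: the `nθ`-th moment equals
`Γ(n+1) πᵀ (-T)⁻ⁿ e`; in the homogeneous case `θ = 1` the `n`-th moment equals
`n! πᵀ (-T)⁻ⁿ e`. -/
theorem stmt17 {p : ℕ} (T : Matrix (Fin p) (Fin p) ℝ) (hT : IsSubIntensity T)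
    (hEig : ∀ μ ∈ spectrum ℂ (T.map (algebraMap ℝ ℂ)), μ.re < 0)
    (π : Fin p → ℝ) (hπ : IsProbVec π) (θ : ℝ) (hθ : 0 < θ) :
    (∀ n : ℕ, 1 ≤ n →
      ∫ y in Set.Ioi (0:ℝ),
          ((n : ℝ) * θ) * y ^ ((n : ℝ) * θ - 1) *
            (π ⬝ᵥ (NormedSpace.exp ((y ^ θ) • T)) *ᵥ (fun _ => (1:ℝ)))
        = Real.Gamma ((n : ℝ) + 1) * (π ⬝ᵥ ((-T)⁻¹ ^ n) *ᵥ (fun _ => (1:ℝ)))) ∧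
    (∀ n : ℕ, 1 ≤ n →
      ∫ y in Set.Ioi (0:ℝ),
          (n : ℝ) * y ^ (n - 1) *
            (π ⬝ᵥ (NormedSpace.exp (y • T)) *ᵥ (fun _ => (1:ℝ)))
        = (n.factorial : ℝ) * (π ⬝ᵥ ((-T)⁻¹ ^ n) *ᵥ (fun _ => (1:ℝ)))) := by
  classical
  -- T is invertible
  have hTc : IsUnit (T.map (algebraMap ℝ ℂ)) := by
    by_contra h
    have h0 : (0:ℂ) ∈ spectrum ℂ (T.map (algebraMap ℝ ℂ)) := (spectrum.zero_mem_iff (R := ℂ)).mpr h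
    simpa using hEig 0 h0
  have hdet : IsUnit T.det := by
    have h1 : IsUnit (T.map (algebraMap ℝ ℂ)).det :=
      (Matrix.isUnit_iff_isUnit_det _).mp hTc
    have h2 : algebraMap ℝ ℂ T.det = (T.map (algebraMap ℝ ℂ)).det := by
      rw [RingHom.map_det]
      rfl
    refine isUnit_iff_ne_zero.mpr fun h3 => ?_
    rw [h3, map_zero] at h2
    rw [← h2] at h1
    exact not_isUnit_zero h1
  have hTi : T * T⁻¹ = 1 := Matrix.mul_nonsing_inv T hdet
  have hinv : (-T)⁻¹ = -(T⁻¹) := Matrix.inv_eq_right_inv (by rw [neg_mul_neg, hTi])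
  -- the homogeneous case
  have hmain : ∀ n : ℕ, 1 ≤ n →
      ∫ y in Set.Ioi (0:ℝ),
          (n : ℝ) * y ^ (n - 1) * (π ⬝ᵥ (exp (y • T)) *ᵥ (fun _ => (1:ℝ)))
        = (n.factorial : ℝ) * (π ⬝ᵥ ((-T)⁻¹ ^ n) *ᵥ (fun _ => (1:ℝ))) := by
    intro n hn
    obtain ⟨m, rfl⟩ : ∃ m, n = m + 1 := ⟨n - 1, (Nat.succ_pred_eq_of_pos hn).symm⟩
    have hcore := core T hEig hTi π m 0
    simp only [pow_zero, Matrix.one_mulVec, add_zero] at hcore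
    have hL : ∫ y in Set.Ioi (0:ℝ),
        ((m + 1 : ℕ) : ℝ) * y ^ (m + 1 - 1) * (π ⬝ᵥ (exp (y • T)) *ᵥ (fun _ => (1:ℝ)))
        = ((m + 1 : ℕ) : ℝ) *
          ∫ y in Set.Ioi (0:ℝ), y ^ m * (π ⬝ᵥ (exp (y • T)) *ᵥ (fun _ => (1:ℝ))) := by
      rw [← integral_const_mul]
      congr 1
      funext y
      simp only [Nat.add_sub_cancel]
      ring
    rw [hL, hcore]
    -- right side
    have hR : ((-T)⁻¹ ^ (m + 1)) *ᵥ (fun _ => (1:ℝ))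
        = ((-1 : ℝ) ^ (m + 1)) • ((T⁻¹ ^ (m + 1)) *ᵥ (fun _ => (1:ℝ))) := by
      rw [hinv, ← neg_one_smul ℝ T⁻¹, smul_pow, Matrix.smul_mulVec]
    rw [hR, dotProduct_smul, smul_eq_mul]
    rw [Nat.factorial_succ]
    push_cast
    ring
  refine ⟨?_, hmain⟩
  intro n hn
  have hsub := integral_comp_rpow_Ioi
    (fun u => (n : ℝ) * u ^ (n - 1) * (π ⬝ᵥ (exp (u • T)) *ᵥ (fun _ => (1:ℝ))))
    (ne_of_gt hθ)
  have heq : EqOn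
      (fun y : ℝ => ((n : ℝ) * θ) * y ^ ((n : ℝ) * θ - 1) *
        (π ⬝ᵥ (exp ((y ^ θ) • T)) *ᵥ (fun _ => (1:ℝ))))
      (fun y : ℝ => (|θ| * y ^ (θ - 1)) •
        ((n : ℝ) * (y ^ θ) ^ (n - 1) * (π ⬝ᵥ (exp ((y ^ θ) • T)) *ᵥ (fun _ => (1:ℝ)))))
      (Set.Ioi 0) := by
    intro y hy
    have hy0 : (0:ℝ) < y := hy
    have h1 : ((y : ℝ) ^ θ) ^ (n - 1) = y ^ (θ * ((n : ℝ) - 1)) := by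
      rw [← Real.rpow_natCast (y ^ θ) (n - 1), ← Real.rpow_mul hy0.le]
      congr 1
      rw [Nat.cast_sub hn, Nat.cast_one]
      try ring
    have h2 : y ^ (θ - 1) * y ^ (θ * ((n : ℝ) - 1)) = y ^ ((n : ℝ) * θ - 1) := by
      rw [← Real.rpow_add hy0]
      congr 1
      ring
    simp only [smul_eq_mul]
    rw [abs_of_pos hθ, h1, ← h2]
    ring
  rw [setIntegral_congr_fun measurableSet_Ioi heq, hsub, hmain n hn,
    Real.Gamma_nat_eq_factorial]
end
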